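/- For every n ≥ 1 there exists a constant C > 0, depending only on n, such that for every ν > 0, t > 0, and every bounded function v₀ ∈ W^{1,1}(ℝⁿ), the function w := Φ_{νt} ∗ v₀ satisfies ‖∇w‖_{L²(ℝⁿ)} ≤ C (νt)^{-1/4} ‖v₀‖_{L^∞}^{1/2} ‖∇v₀‖_{L¹}^{1/2}. -/

import Mathlib

open MeasureTheory

/-- The heat kernel `Φ_s(x) = (4πs)^{-n/2} exp(-|x|²/(4s))` on `ℝⁿ`. -/
noncomputable def heatKernel (n : ℕ) (s : ℝ) (x : EuclideanSpace ℝ (Fin n)) : ℝ :=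
  (4 * Real.pi * s) ^ (-(n : ℝ) / 2) * Real.exp (-‖x‖ ^ 2 / (4 * s))

/-- The heat evolution `(Φ_s ∗ v)(x) = ∫ Φ_s(x − y) v(y) dy`, representing `e^{sΔ}v`. -/
noncomputable def heatConv {n : ℕ} (s : ℝ) (v : EuclideanSpace ℝ (Fin n) → ℝ)
    (x : EuclideanSpace ℝ (Fin n)) : ℝ :=
  ∫ y, heatKernel n s (x - y) * v y

section Aux

open Real Filter Topology ENNReal

variable {n : ℕ}

local notation "E" => EuclideanSpace ℝ (Fin n)

/-- Derivative of the heat kernel. -/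
noncomputable def heatKernelDeriv (n : ℕ) (s : ℝ) (x : EuclideanSpace ℝ (Fin n)) :
    EuclideanSpace ℝ (Fin n) →L[ℝ] ℝ :=
  (-(heatKernel n s x) / (2 * s)) • innerSL ℝ x

lemma heatKernel_eq (s : ℝ) (hs : 0 < s) (x : E) :
    heatKernel n s x = (4 * π * s) ^ (-(n : ℝ) / 2) * rexp (-(1 / (4 * s)) * ‖x‖ ^ 2) := by
  rw [heatKernel]
  ring_nf

lemma heatKernel_nonneg (s : ℝ) (hs : 0 < s) (x : E) : 0 ≤ heatKernel n s x := by
  unfold heatKernel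
  have : (0:ℝ) < 4 * Real.pi * s := by positivity
  positivity

lemma heatKernel_continuous (s : ℝ) : Continuous (heatKernel n s) := by
  unfold heatKernel
  exact continuous_const.mul
    (Real.continuous_exp.comp (((continuous_norm.pow 2).neg).div_const _))

lemma heatKernel_le (s : ℝ) (hs : 0 < s) (x : E) :
    heatKernel n s x ≤ (4 * π * s) ^ (-(n : ℝ) / 2) := by
  unfold heatKernel
  have h1 : rexp (-‖x‖ ^ 2 / (4 * s)) ≤ 1 := by
    rw [Real.exp_le_one_iff]
    have : 0 < 4 * s := by linarith
    have := norm_nonneg x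
    rw [div_nonpos_iff]
    right
    constructor
    · nlinarith
    · linarith
  have h2 : (0:ℝ) ≤ (4 * π * s) ^ (-(n : ℝ) / 2) := by
    have : (0:ℝ) < 4 * π * s := by positivity
    positivity
  nlinarith [Real.exp_pos (-‖x‖ ^ 2 / (4 * s))]

/-- integrability of a Gaussian on E -/
lemma integrable_gauss (b : ℝ) (hb : 0 < b) :
    Integrable (fun x : E => rexp (-b * ‖x‖ ^ 2)) := by
  have h := (GaussianFourier.integrable_cexp_neg_mul_sq_norm_add
    (V := EuclideanSpace ℝ (Fin n)) (b := (b : ℂ)) (by simpa using hb) 0 0).norm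
  convert h using 2 with x
  rw [Complex.norm_exp]
  congr 1
  simp only [Complex.add_re, Complex.mul_re, Complex.neg_re, Complex.ofReal_re,
    Complex.neg_im, Complex.ofReal_im, Complex.zero_re, Complex.zero_im]
  rw [← Complex.ofReal_pow, Complex.ofReal_re]
  simp

/-- pointwise bound killing the factor ‖x‖ -/
lemma norm_mul_gauss_le (b r : ℝ) (hb : 0 < b) (hr : 0 ≤ r) :
    r * rexp (-b * r ^ 2) ≤ (1 + 2 / b) * rexp (-(b / 2) * r ^ 2) := by
  set X := rexp (b / 2 * r ^ 2) with hXdef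
  have hX : 0 < X := Real.exp_pos _
  have hX1 : 1 ≤ X := Real.one_le_exp (by positivity)
  have h2 : b / 2 * r ^ 2 ≤ X := by
    nlinarith [Real.add_one_le_exp (b / 2 * r ^ 2)]
  have h6 : r ^ 2 ≤ 2 / b * X := by
    rw [div_mul_eq_mul_div, le_div_iff₀ hb]; nlinarith
  have key : r * rexp (-(b / 2) * r ^ 2) ≤ 1 + 2 / b := by
    have hexp : rexp (-(b / 2) * r ^ 2) = X⁻¹ := by
      rw [hXdef, ← Real.exp_neg]; ring_nf
    rw [hexp]
    have h3 : r ≤ 1 + r ^ 2 := by nlinarith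
    calc r * X⁻¹ ≤ (1 + r ^ 2) * X⁻¹ := by
          exact mul_le_mul_of_nonneg_right h3 (by positivity)
      _ ≤ ((1 + 2 * b⁻¹) * X) * X⁻¹ := by
          apply mul_le_mul_of_nonneg_right _ (by positivity)
          rw [div_eq_mul_inv] at h6
          nlinarith
      _ = (1 + 2 * b⁻¹) * (X * X⁻¹) := by ring
      _ = 1 + 2 * b⁻¹ := by rw [mul_inv_cancel₀ hX.ne', mul_one]
      _ = 1 + 2 / b := by rw [div_eq_mul_inv]
  have split : rexp (-b * r ^ 2) = rexp (-(b / 2) * r ^ 2) * rexp (-(b / 2) * r ^ 2) := by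
    rw [← Real.exp_add]; ring_nf
  calc r * rexp (-b * r ^ 2) = (r * rexp (-(b / 2) * r ^ 2)) * rexp (-(b / 2) * r ^ 2) := by
        rw [split]; ring
    _ ≤ (1 + 2 / b) * rexp (-(b / 2) * r ^ 2) :=
        mul_le_mul_of_nonneg_right key (Real.exp_pos _).le

lemma integrable_norm_mul_gauss (b : ℝ) (hb : 0 < b) :
    Integrable (fun x : E => ‖x‖ * rexp (-b * ‖x‖ ^ 2)) := by
  apply Integrable.mono' ((integrable_gauss (b / 2) (by linarith)).const_mul (1 + 2 / b))
  · exact (continuous_norm.mul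
      (Real.continuous_exp.comp (continuous_const.mul (continuous_norm.pow 2)))).aestronglyMeasurable
  · filter_upwards with x
    rw [Real.norm_eq_abs, abs_of_nonneg (by positivity)]
    exact norm_mul_gauss_le b ‖x‖ hb (norm_nonneg x)

lemma integrable_heatKernel (s : ℝ) (hs : 0 < s) : Integrable (heatKernel n s) := by
  have : heatKernel n s = fun x : E =>
      (4 * π * s) ^ (-(n : ℝ) / 2) * rexp (-(1 / (4 * s)) * ‖x‖ ^ 2) := by
    funext x; exact heatKernel_eq s hs x
  rw [this]
  exact (integrable_gauss (1 / (4 * s)) (by positivity)).const_mul _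

lemma integral_heatKernel (s : ℝ) (hs : 0 < s) : ∫ x : E, heatKernel n s x = 1 := by
  have hb : (0:ℝ) < 1 / (4 * s) := by positivity
  simp_rw [heatKernel_eq s hs]
  rw [integral_const_mul, GaussianFourier.integral_rexp_neg_mul_sq_norm hb]
  rw [finrank_euclideanSpace_fin]
  have h1 : π / (1 / (4 * s)) = 4 * π * s := by field_simp
  rw [h1, ← Real.rpow_add (by positivity)]
  rw [show -(n:ℝ) / 2 + (n:ℝ) / 2 = 0 by ring, Real.rpow_zero]

lemma hasFDerivAt_heatKernel (s : ℝ) (hs : 0 < s) (x : E) :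
    HasFDerivAt (heatKernel n s) (heatKernelDeriv n s x) x := by
  have hns : HasFDerivAt (fun y : E => ‖y‖ ^ 2) (2 • innerSL ℝ x) x :=
    (hasStrictFDerivAt_norm_sq x).hasFDerivAt
  have h1 : HasFDerivAt (fun y : E => (-(4 * s)⁻¹) * ‖y‖ ^ 2)
      ((-(4 * s)⁻¹) • (2 • innerSL ℝ x)) x := hns.const_mul _
  have h2 := h1.exp
  have h3 := h2.const_mul ((4 * π * s) ^ (-(n : ℝ) / 2))
  have hfun : heatKernel n s
      = fun y : E => (4 * π * s) ^ (-(n : ℝ) / 2) * rexp ((-(4 * s)⁻¹) * ‖y‖ ^ 2) := by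
    funext y; rw [heatKernel]; ring_nf
  rw [hfun]
  refine h3.congr_fderiv (Eq.symm ?_)
  ext y
  have hexp : rexp (-(4 * s)⁻¹ * ‖x‖ ^ 2) = rexp (-‖x‖ ^ 2 / (4 * s)) := by ring_nf
  simp only [heatKernelDeriv, heatKernel, ContinuousLinearMap.smul_apply, smul_eq_mul,
    ContinuousLinearMap.coe_smul', Pi.smul_apply]
  rw [hexp]
  ring

lemma norm_heatKernelDeriv (s : ℝ) (hs : 0 < s) (x : E) :
    ‖heatKernelDeriv n s x‖ = heatKernel n s x / (2 * s) * ‖x‖ := by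
  rw [heatKernelDeriv]
  rw [norm_smul (-(heatKernel n s x) / (2 * s)) (innerSL ℝ x), innerSL_apply_norm,
    Real.norm_eq_abs, abs_div, abs_neg,
    abs_of_nonneg (heatKernel_nonneg s hs x), abs_of_nonneg (by linarith : (0:ℝ) ≤ 2 * s)]

lemma heatKernelDeriv_bound (s : ℝ) (hs : 0 < s) :
    ∃ B : ℝ, ∀ x : E, ‖heatKernelDeriv n s x‖ ≤ B := by
  have ha : (0:ℝ) < (4 * π * s) ^ (-(n : ℝ) / 2) := by
    have : (0:ℝ) < 4 * π * s := by positivity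
    positivity
  have hb : (0:ℝ) < 1 / (4 * s) := by positivity
  refine ⟨(4 * π * s) ^ (-(n : ℝ) / 2) / (2 * s) * (1 + 2 / (1 / (4 * s))), fun x => ?_⟩
  rw [norm_heatKernelDeriv s hs x, heatKernel_eq s hs]
  have key := norm_mul_gauss_le (1 / (4 * s)) ‖x‖ hb (norm_nonneg x)
  have hexp : rexp (-(1 / (4 * s) / 2) * ‖x‖ ^ 2) ≤ 1 := by
    rw [Real.exp_le_one_iff]
    have := sq_nonneg ‖x‖
    nlinarith
  have hA : (0:ℝ) ≤ (4 * π * s) ^ (-(n : ℝ) / 2) / (2 * s) := by positivity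
  calc (4 * π * s) ^ (-(n : ℝ) / 2) * rexp (-(1 / (4 * s)) * ‖x‖ ^ 2) / (2 * s) * ‖x‖
      = (4 * π * s) ^ (-(n : ℝ) / 2) / (2 * s) * (‖x‖ * rexp (-(1 / (4 * s)) * ‖x‖ ^ 2)) := by
        ring
    _ ≤ (4 * π * s) ^ (-(n : ℝ) / 2) / (2 * s)
        * ((1 + 2 / (1 / (4 * s))) * rexp (-(1 / (4 * s) / 2) * ‖x‖ ^ 2)) :=
        mul_le_mul_of_nonneg_left key hA
    _ ≤ (4 * π * s) ^ (-(n : ℝ) / 2) / (2 * s) * ((1 + 2 / (1 / (4 * s))) * 1) := by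
        apply mul_le_mul_of_nonneg_left _ hA
        apply mul_le_mul_of_nonneg_left hexp
        positivity
    _ = (4 * π * s) ^ (-(n : ℝ) / 2) / (2 * s) * (1 + 2 / (1 / (4 * s))) := by ring

lemma heatKernelDeriv_continuous (s : ℝ) (hs : 0 < s) :
    Continuous (fun x : E => heatKernelDeriv n s x) := by
  unfold heatKernelDeriv
  exact (((heatKernel_continuous s).neg).div_const _).smul (innerSL ℝ).continuous

lemma integrable_norm_heatKernelDeriv (s : ℝ) (hs : 0 < s) :
    Integrable (fun x : E => ‖heatKernelDeriv n s x‖) := by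
  have hrw : (fun x : E => ‖heatKernelDeriv n s x‖)
      = fun x => ((4 * π * s) ^ (-(n : ℝ) / 2) / (2 * s))
          * (‖x‖ * rexp (-(1 / (4 * s)) * ‖x‖ ^ 2)) := by
    funext x
    rw [norm_heatKernelDeriv s hs x, heatKernel_eq s hs]
    ring
  rw [hrw]
  exact (integrable_norm_mul_gauss (1 / (4 * s)) (by positivity)).const_mul _

/-- the constant `c n` such that `∫ ‖∇Φ_s‖ = c n / √s`. -/
noncomputable def heatC (n : ℕ) : ℝ :=
  (4 * π) ^ (-(n : ℝ) / 2) * (∫ u : EuclideanSpace ℝ (Fin n), ‖u‖ * rexp (-(1/4) * ‖u‖ ^ 2)) / 2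

lemma integral_norm_heatKernelDeriv (s : ℝ) (hs : 0 < s) :
    ∫ x : E, ‖heatKernelDeriv n s x‖ = heatC n / √s := by
  have hrw : (fun x : E => ‖heatKernelDeriv n s x‖)
      = fun x => ((4 * π * s) ^ (-(n : ℝ) / 2) / (2 * s))
          * (‖x‖ * rexp (-(1 / (4 * s)) * ‖x‖ ^ 2)) := by
    funext x
    rw [norm_heatKernelDeriv s hs x, heatKernel_eq s hs]
    ring
  rw [hrw, integral_const_mul]
  have h0 : (0:ℝ) ≤ √s := Real.sqrt_nonneg s
  have hsqpos : (0:ℝ) < √s := Real.sqrt_pos.mpr hs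
  have hsub : ∫ x : E, ‖x‖ * rexp (-(1 / (4 * s)) * ‖x‖ ^ 2)
      = √s ^ n * (√s * ∫ u : E, ‖u‖ * rexp (-(1 / 4) * ‖u‖ ^ 2)) := by
    have hcs := MeasureTheory.Measure.integral_comp_smul_of_nonneg (μ := volume)
      (fun x : E => ‖x‖ * rexp (-(1 / (4 * s)) * ‖x‖ ^ 2)) (√s) (hR := h0)
    have hg : (fun x : E => ‖(√s : ℝ) • x‖ * rexp (-(1 / (4 * s)) * ‖(√s : ℝ) • x‖ ^ 2))
        = fun x : E => √s * (‖x‖ * rexp (-(1 / 4) * ‖x‖ ^ 2)) := by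
      funext x
      have h1 : ‖(√s : ℝ) • x‖ = √s * ‖x‖ := by
        rw [norm_smul, Real.norm_eq_abs, abs_of_nonneg h0]
      rw [h1, mul_pow, Real.sq_sqrt hs.le]
      have h2 : -(1 / (4 * s)) * (s * ‖x‖ ^ 2) = -(1 / 4) * ‖x‖ ^ 2 := by
        field_simp
      rw [h2]; ring
    rw [hg, integral_const_mul, finrank_euclideanSpace_fin, smul_eq_mul] at hcs
    have hsn : (0:ℝ) < √s ^ n := pow_pos hsqpos n
    rw [eq_comm, inv_mul_eq_iff_eq_mul₀ hsn.ne'] at hcs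
    exact hcs
  rw [hsub, heatC]
  have h4 : (4 * π * s) ^ (-(n : ℝ) / 2) = (4 * π) ^ (-(n : ℝ) / 2) * s ^ (-(n : ℝ) / 2) := by
    rw [← Real.mul_rpow (by positivity) hs.le]
  have h5 : (√s : ℝ) ^ n = s ^ ((n : ℝ) / 2) := by
    rw [Real.sqrt_eq_rpow, ← Real.rpow_natCast (s ^ ((1:ℝ) / 2)) n, ← Real.rpow_mul hs.le]
    congr 1
    ring
  have h6 : s ^ (-(n : ℝ) / 2) * s ^ ((n : ℝ) / 2) = 1 := by
    rw [← Real.rpow_add hs, show -(n:ℝ) / 2 + (n:ℝ) / 2 = 0 by ring, Real.rpow_zero]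
  have hss : √s * √s = s := Real.mul_self_sqrt hs.le
  rw [h4, h5]
  set a4 := (4 * π) ^ (-(n : ℝ) / 2)
  set q := s ^ (-(n : ℝ) / 2)
  set q' := s ^ ((n : ℝ) / 2)
  set J := ∫ u : E, ‖u‖ * rexp (-(1 / 4) * ‖u‖ ^ 2)
  have hstep : √s / (2 * s) = 1 / (2 * √s) := by
    rw [div_eq_div_iff (by positivity) (by positivity)]
    nlinarith [hss]
  calc a4 * q / (2 * s) * (q' * (√s * J)) = a4 * J * (q * q') * (√s / (2 * s)) := by ring
    _ = a4 * J * (√s / (2 * s)) := by rw [h6, mul_one]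
    _ = a4 * J * (1 / (2 * √s)) := by rw [hstep]
    _ = a4 * J / 2 / √s := by ring

lemma hasFDerivAt_heatConv (s : ℝ) (hs : 0 < s) (v : E → ℝ) (hvc : Continuous v)
    (hvi : Integrable v) (x : E) :
    HasFDerivAt (heatConv s v) (∫ y, v y • heatKernelDeriv n s (x - y)) x := by
  obtain ⟨B, hB⟩ := heatKernelDeriv_bound (n := n) s hs
  have hcont : ∀ x' : E, Continuous (fun y : E => heatKernel n s (x' - y)) := fun x' =>
    (heatKernel_continuous s).comp (continuous_const.sub continuous_id)
  have hcont' : ∀ x' : E, Continuous (fun y : E => heatKernelDeriv n s (x' - y)) := fun x' =>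
    (heatKernelDeriv_continuous s hs).comp (continuous_const.sub continuous_id)
  have key := hasFDerivAt_integral_of_dominated_of_fderiv_le
    (𝕜 := ℝ) (μ := (volume : Measure E))
    (F := fun (x : E) (y : E) => heatKernel n s (x - y) * v y)
    (F' := fun (x : E) (y : E) => v y • heatKernelDeriv n s (x - y))
    (x₀ := x) (bound := fun y => ‖v y‖ * B) Filter.univ_mem
    ?_ ?_ ?_ ?_ ?_ ?_
  · exact key
  · filter_upwards with x'
    exact ((hcont x').mul hvc).aestronglyMeasurable
  · apply hvi.bdd_mul (c := (4 * π * s) ^ (-(n : ℝ) / 2)) (hcont x).aestronglyMeasurable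
    refine Filter.Eventually.of_forall fun y => ?_
    rw [Real.norm_eq_abs, abs_of_nonneg (heatKernel_nonneg s hs _)]
    exact heatKernel_le s hs _
  · exact (hvc.smul (hcont' x)).aestronglyMeasurable
  · filter_upwards with y
    intro x' _
    rw [norm_smul (v y) (heatKernelDeriv n s (x' - y))]
    exact mul_le_mul_of_nonneg_left (hB _) (norm_nonneg _)
  · exact hvi.norm.mul_const B
  · filter_upwards with y
    intro x' _
    have h1 : HasFDerivAt (fun x' : E => x' - y) (ContinuousLinearMap.id ℝ _) x' :=
      (hasFDerivAt_id x').sub_const y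
    have h2 := (hasFDerivAt_heatKernel s hs (x' - y)).comp x' h1
    have h3 := h2.mul_const (v y)
    simpa using h3

lemma norm_fderiv_heatConv_le (s : ℝ) (hs : 0 < s) (v : E → ℝ) (hvc : Continuous v)
    (hvi : Integrable v) (M : ℝ) (hM : ∀ x, |v x| ≤ M) (x : E) :
    ‖fderiv ℝ (heatConv s v) x‖ ≤ M * (heatC n / √s) := by
  have hW := hasFDerivAt_heatConv s hs v hvc hvi x
  rw [hW.fderiv]
  have hint : Integrable (fun y : E => ‖heatKernelDeriv n s (x - y)‖) :=
    (integrable_norm_heatKernelDeriv s hs).comp_sub_left x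
  calc ‖∫ y, v y • heatKernelDeriv n s (x - y)‖
      ≤ ∫ y, ‖v y • heatKernelDeriv n s (x - y)‖ := norm_integral_le_integral_norm _
    _ ≤ ∫ y, M * ‖heatKernelDeriv n s (x - y)‖ := by
        apply integral_mono_of_nonneg
        · filter_upwards with y; positivity
        · exact hint.const_mul M
        · filter_upwards with y
          rw [norm_smul (v y) (heatKernelDeriv n s (x - y)), Real.norm_eq_abs]
          exact mul_le_mul_of_nonneg_right (hM y) (norm_nonneg _)
    _ = M * ∫ y, ‖heatKernelDeriv n s (x - y)‖ := integral_const_mul M _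
    _ = M * (heatC n / √s) := by
        rw [integral_sub_left_eq_self (fun z => ‖heatKernelDeriv n s z‖) volume x,
          integral_norm_heatKernelDeriv s hs]

/-- L¹ translation estimate for a differentiable function with integrable gradient. -/
lemma shift_L1 (v : E → ℝ) (hd : Differentiable ℝ v)
    (hgi : Integrable (fun x => ‖fderiv ℝ v x‖)) (e : E) (he : ‖e‖ = 1)
    (h : ℝ) (hh : 0 < h) :
    ∫⁻ y, ENNReal.ofReal |v (y + h • e) - v y| ≤
      ENNReal.ofReal h * ∫⁻ x, ENNReal.ofReal ‖fderiv ℝ v x‖ := by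
  set N : E → ℝ := fun z => ‖fderiv ℝ v z‖ with hNdef
  have hNnonneg : ∀ z, 0 ≤ N z := fun z => norm_nonneg _
  have hNmeas : Measurable N := (measurable_fderiv ℝ v).norm
  set Q : E → ℝ≥0∞ := fun y => ∫⁻ σ in Set.Ioc (0:ℝ) h, ENNReal.ofReal (N (y + σ • e))
    with hQdef
  have hmeas2 : Measurable (fun p : E × ℝ => ENNReal.ofReal (N (p.1 + p.2 • e))) :=
    ENNReal.measurable_ofReal.comp (hNmeas.comp (measurable_fst.add (measurable_snd.smul_const e)))
  have hQmeas : Measurable Q :=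
    Measurable.lintegral_prod_right' (f := fun p : E × ℝ => ENNReal.ofReal (N (p.1 + p.2 • e)))
      hmeas2
  have hT : ∫⁻ y, Q y = ENNReal.ofReal h * ∫⁻ z, ENNReal.ofReal (N z) := by
    rw [hQdef]
    rw [lintegral_lintegral_swap (hmeas2.aemeasurable)]
    have hinner : ∀ σ : ℝ, ∫⁻ y, ENNReal.ofReal (N (y + σ • e)) = ∫⁻ z, ENNReal.ofReal (N z) :=
      fun σ => lintegral_add_right_eq_self (fun z => ENNReal.ofReal (N z)) (σ • e)
    rw [lintegral_congr fun σ => hinner σ]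
    rw [setLIntegral_const]
    rw [Real.volume_Ioc]
    rw [sub_zero, mul_comm]
  have hGfin : ∫⁻ z, ENNReal.ofReal (N z) < ⊤ := by
    have heq : ∫⁻ z, ENNReal.ofReal (N z) = ∫⁻ z, (‖N z‖₊ : ℝ≥0∞) := by
      apply lintegral_congr
      intro z
      rw [← Real.enorm_eq_ofReal (hNnonneg z), enorm_eq_nnnorm]
    rw [heq]
    exact hgi.2
  have hQfin : ∀ᵐ y : E, Q y < ⊤ := by
    apply ae_lt_top hQmeas
    rw [hT]
    exact (ENNReal.mul_lt_top ENNReal.ofReal_lt_top hGfin).ne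
  have hP : ∀ᵐ y : E, ENNReal.ofReal |v (y + h • e) - v y| ≤ Q y := by
    filter_upwards [hQfin] with y hQy
    have hline : ∀ σ : ℝ, HasDerivAt (fun τ : ℝ => v (y + τ • e))
        ((fderiv ℝ v (y + σ • e)) e) σ := by
      intro σ
      have h1 : HasDerivAt (fun τ : ℝ => y + τ • e) e σ := by
        simpa using ((hasDerivAt_id σ).smul_const e).const_add y
      exact (hd (y + σ • e)).hasFDerivAt.comp_hasDerivAt σ h1
    have hmeasD : Measurable (fun σ : ℝ => (fderiv ℝ v (y + σ • e)) e) :=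
      (measurable_fderiv_apply_const (𝕜 := ℝ) (f := v) e).comp
        (measurable_const.add (measurable_id.smul_const e))
    have hmeasN : Measurable (fun σ : ℝ => N (y + σ • e)) :=
      hNmeas.comp (measurable_const.add (measurable_id.smul_const e))
    have hNint : IntegrableOn (fun σ : ℝ => N (y + σ • e)) (Set.Ioc 0 h) := by
      refine ⟨hmeasN.aestronglyMeasurable, ?_⟩
      rw [hasFiniteIntegral_iff_ofReal (Filter.Eventually.of_forall fun σ => hNnonneg _)]
      exact hQy
    have hDint : IntervalIntegrable (fun σ : ℝ => (fderiv ℝ v (y + σ • e)) e) volume 0 h := by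
      rw [intervalIntegrable_iff_integrableOn_Ioc_of_le hh.le]
      apply Integrable.mono' hNint hmeasD.aestronglyMeasurable
      filter_upwards with σ
      calc ‖(fderiv ℝ v (y + σ • e)) e‖ ≤ ‖fderiv ℝ v (y + σ • e)‖ * ‖e‖ :=
            ContinuousLinearMap.le_opNorm _ _
        _ = N (y + σ • e) := by rw [he, mul_one]
    have hftc := intervalIntegral.integral_eq_sub_of_hasDerivAt
      (f := fun τ : ℝ => v (y + τ • e)) (fun σ _ => hline σ) hDint
    have hv0 : v (y + (0:ℝ) • e) = v y := by rw [zero_smul, add_zero]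
    have hbound : |v (y + h • e) - v y| ≤ ∫ σ in (0:ℝ)..h, N (y + σ • e) := by
      rw [← hv0, ← hftc, ← Real.norm_eq_abs]
      calc ‖∫ σ in (0:ℝ)..h, (fderiv ℝ v (y + σ • e)) e‖
          ≤ ∫ σ in (0:ℝ)..h, ‖(fderiv ℝ v (y + σ • e)) e‖ :=
            intervalIntegral.norm_integral_le_integral_norm hh.le
        _ ≤ ∫ σ in (0:ℝ)..h, N (y + σ • e) := by
            apply intervalIntegral.integral_mono_on hh.le
            · exact hDint.norm
            · rw [intervalIntegrable_iff_integrableOn_Ioc_of_le hh.le]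
              exact hNint
            · intro σ _
              calc ‖(fderiv ℝ v (y + σ • e)) e‖ ≤ ‖fderiv ℝ v (y + σ • e)‖ * ‖e‖ :=
                    ContinuousLinearMap.le_opNorm _ _
                _ = N (y + σ • e) := by rw [he, mul_one]
    have hQeq : Q y = ENNReal.ofReal (∫ σ in (0:ℝ)..h, N (y + σ • e)) := by
      rw [intervalIntegral.integral_of_le hh.le]
      rw [ofReal_integral_eq_lintegral_ofReal hNint
        (Filter.Eventually.of_forall fun σ => hNnonneg _)]
    rw [hQeq]
    exact ENNReal.ofReal_le_ofReal hbound
  calc ∫⁻ y, ENNReal.ofReal |v (y + h • e) - v y| ≤ ∫⁻ y, Q y := lintegral_mono_ae hP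
    _ = ENNReal.ofReal h * ∫⁻ x, ENNReal.ofReal ‖fderiv ℝ v x‖ := hT

lemma heatConv_shift (s : ℝ) (hs : 0 < s) (v : E → ℝ) (hvc : Continuous v)
    (hvi : Integrable v) (z : E) (x : E) :
    heatConv s v (x + z) - heatConv s v x
      = ∫ y, heatKernel n s (x - y) * (v (y + z) - v y) := by
  have hbd : ∃ C, ∀ y : E, ‖heatKernel n s (x - y)‖ ≤ C := by
    refine ⟨(4 * π * s) ^ (-(n : ℝ) / 2), fun y => ?_⟩
    rw [Real.norm_eq_abs, abs_of_nonneg (heatKernel_nonneg s hs _)]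
    exact heatKernel_le s hs _
  have hmeas : AEStronglyMeasurable (fun y : E => heatKernel n s (x - y)) volume :=
    ((heatKernel_continuous s).comp (continuous_const.sub continuous_id)).aestronglyMeasurable
  have hint1 : Integrable (fun y : E => heatKernel n s (x - y) * v (y + z)) :=
    (hvi.comp_add_right z).bdd_mul hmeas (Filter.Eventually.of_forall hbd.choose_spec)
  have hint2 : Integrable (fun y : E => heatKernel n s (x - y) * v y) :=
    hvi.bdd_mul hmeas (Filter.Eventually.of_forall hbd.choose_spec)
  have h1 : heatConv s v (x + z) = ∫ y, heatKernel n s (x - y) * v (y + z) := by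
    show (∫ y, heatKernel n s (x + z - y) * v y) = _
    rw [← integral_add_right_eq_self (fun y => heatKernel n s (x + z - y) * v y) z]
    congr 1
    funext y
    congr 2
    abel
  rw [h1]
  show _ - (∫ y, heatKernel n s (x - y) * v y) = _
  rw [← integral_sub hint1 hint2]
  congr 1
  funext y
  ring

lemma heatConv_shift_L1 (s : ℝ) (hs : 0 < s) (v : E → ℝ) (hvc : Continuous v)
    (hvi : Integrable v) (hd : Differentiable ℝ v)
    (hgi : Integrable (fun x => ‖fderiv ℝ v x‖)) (e : E) (he : ‖e‖ = 1)
    (h : ℝ) (hh : 0 < h) :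
    ∫⁻ x, ENNReal.ofReal |heatConv s v (x + h • e) - heatConv s v x| ≤
      ENNReal.ofReal h * ∫⁻ x, ENNReal.ofReal ‖fderiv ℝ v x‖ := by
  have hbd : ∀ x : E, ∃ C, ∀ y : E, ‖heatKernel n s (x - y)‖ ≤ C := by
    intro x
    refine ⟨(4 * π * s) ^ (-(n : ℝ) / 2), fun y => ?_⟩
    rw [Real.norm_eq_abs, abs_of_nonneg (heatKernel_nonneg s hs _)]
    exact heatKernel_le s hs _
  have hcont : ∀ x : E, Continuous (fun y : E => heatKernel n s (x - y)) := fun x =>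
    (heatKernel_continuous s).comp (continuous_const.sub continuous_id)
  have hΔint : Integrable (fun y : E => |v (y + h • e) - v y|) :=
    ((hvi.comp_add_right (h • e)).sub hvi).abs
  have hΔcont : Continuous (fun y : E => |v (y + h • e) - v y|) :=
    ((hvc.comp (continuous_id.add continuous_const)).sub hvc).abs
  have key : ∀ x : E, ENNReal.ofReal |heatConv s v (x + h • e) - heatConv s v x| ≤
      ∫⁻ y, ENNReal.ofReal (heatKernel n s (x - y)) * ENNReal.ofReal |v (y + h • e) - v y| := by
    intro x
    rw [heatConv_shift s hs v hvc hvi (h • e) x]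
    have hintabs : Integrable (fun y : E => heatKernel n s (x - y) * |v (y + h • e) - v y|) :=
      hΔint.bdd_mul (hcont x).aestronglyMeasurable (Filter.Eventually.of_forall (hbd x).choose_spec)
    have h1 : |∫ y, heatKernel n s (x - y) * (v (y + h • e) - v y)|
        ≤ ∫ y, heatKernel n s (x - y) * |v (y + h • e) - v y| := by
      calc |∫ y, heatKernel n s (x - y) * (v (y + h • e) - v y)|
          = ‖∫ y, heatKernel n s (x - y) * (v (y + h • e) - v y)‖ :=
            (Real.norm_eq_abs _).symm
        _ ≤ ∫ y, ‖heatKernel n s (x - y) * (v (y + h • e) - v y)‖ :=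
            norm_integral_le_integral_norm _
        _ = ∫ y, heatKernel n s (x - y) * |v (y + h • e) - v y| := by
            apply integral_congr_ae
            filter_upwards with y
            rw [Real.norm_eq_abs, abs_mul, abs_of_nonneg (heatKernel_nonneg s hs _)]
    calc ENNReal.ofReal |∫ y, heatKernel n s (x - y) * (v (y + h • e) - v y)|
        ≤ ENNReal.ofReal (∫ y, heatKernel n s (x - y) * |v (y + h • e) - v y|) :=
          ENNReal.ofReal_le_ofReal h1
      _ = ∫⁻ y, ENNReal.ofReal (heatKernel n s (x - y) * |v (y + h • e) - v y|) :=
          ofReal_integral_eq_lintegral_ofReal hintabs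
            (Filter.Eventually.of_forall fun y =>
              mul_nonneg (heatKernel_nonneg s hs _) (abs_nonneg _))
      _ = ∫⁻ y, ENNReal.ofReal (heatKernel n s (x - y)) * ENNReal.ofReal |v (y + h • e) - v y| := by
          apply lintegral_congr
          intro y
          rw [ENNReal.ofReal_mul (heatKernel_nonneg s hs _)]
  have hmeasprod : Measurable
      (fun p : E × E => ENNReal.ofReal (heatKernel n s (p.1 - p.2))
        * ENNReal.ofReal |v (p.2 + h • e) - v p.2|) := by
    apply Measurable.mul (f := fun p : E × E => ENNReal.ofReal (heatKernel n s (p.1 - p.2)))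
      (g := fun p : E × E => ENNReal.ofReal |v (p.2 + h • e) - v p.2|)
    · exact ENNReal.measurable_ofReal.comp
        (((heatKernel_continuous s).measurable).comp (measurable_fst.sub measurable_snd))
    · exact ENNReal.measurable_ofReal.comp (hΔcont.measurable.comp measurable_snd)
  calc ∫⁻ x, ENNReal.ofReal |heatConv s v (x + h • e) - heatConv s v x|
      ≤ ∫⁻ x, ∫⁻ y, ENNReal.ofReal (heatKernel n s (x - y))
          * ENNReal.ofReal |v (y + h • e) - v y| := lintegral_mono key
    _ = ∫⁻ y, ∫⁻ x, ENNReal.ofReal (heatKernel n s (x - y))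
          * ENNReal.ofReal |v (y + h • e) - v y| := by
        rw [lintegral_lintegral_swap hmeasprod.aemeasurable]
    _ = ∫⁻ y, (∫⁻ x, ENNReal.ofReal (heatKernel n s (x - y)))
          * ENNReal.ofReal |v (y + h • e) - v y| := by
        apply lintegral_congr
        intro y
        rw [lintegral_mul_const' _ _ (by exact ENNReal.ofReal_ne_top)]
    _ = ∫⁻ y, ENNReal.ofReal |v (y + h • e) - v y| := by
        apply lintegral_congr
        intro y
        have htr : ∫⁻ x, ENNReal.ofReal (heatKernel n s (x - y))
            = ∫⁻ x, ENNReal.ofReal (heatKernel n s x) := by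
          simp_rw [sub_eq_add_neg]
          exact lintegral_add_right_eq_self (fun z => ENNReal.ofReal (heatKernel n s z)) (-y)
        rw [htr, ← ofReal_integral_eq_lintegral_ofReal (integrable_heatKernel s hs)
          (Filter.Eventually.of_forall fun z => heatKernel_nonneg s hs z),
          integral_heatKernel s hs, ENNReal.ofReal_one, one_mul]
    _ ≤ ENNReal.ofReal h * ∫⁻ x, ENNReal.ofReal ‖fderiv ℝ v x‖ :=
        shift_L1 v hd hgi e he h hh

lemma dir_bound (s : ℝ) (hs : 0 < s) (v : E → ℝ) (hvc : Continuous v)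
    (hvi : Integrable v) (hd : Differentiable ℝ v)
    (hgi : Integrable (fun x => ‖fderiv ℝ v x‖)) (e : E) (he : ‖e‖ = 1) :
    ∫⁻ x, ENNReal.ofReal |fderiv ℝ (heatConv s v) x e| ≤
      ∫⁻ x, ENNReal.ofReal ‖fderiv ℝ v x‖ := by
  set w := heatConv s v with hwdef
  set G := ∫⁻ x, ENNReal.ofReal ‖fderiv ℝ v x‖ with hGdef
  have hWd : ∀ x : E, HasFDerivAt w (∫ y, v y • heatKernelDeriv n s (x - y)) x :=
    hasFDerivAt_heatConv s hs v hvc hvi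
  have hwdiff : Differentiable ℝ w := fun x => (hWd x).differentiableAt
  have hwc : Continuous w := hwdiff.continuous
  set u : ℕ → ℝ := fun k => 1 / (k + 1 : ℝ) with hudef
  have hu_pos : ∀ k, 0 < u k := fun k => by positivity
  have hu_to : Filter.Tendsto u Filter.atTop (𝓝 0) := tendsto_one_div_add_atTop_nhds_zero_nat
  have hpt : ∀ x : E, Filter.Tendsto (fun k => |w (x + u k • e) - w x| / u k) Filter.atTop
      (𝓝 |fderiv ℝ w x e|) := by
    intro x
    have h1 : HasDerivAt (fun τ : ℝ => x + τ • e) e 0 := by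
      simpa using ((hasDerivAt_id (0:ℝ)).smul_const e).const_add x
    have h2 : x + (0:ℝ) • e = x := by rw [zero_smul, add_zero]
    have hdx : HasFDerivAt w (fderiv ℝ w x) (x + (0:ℝ) • e) := by
      rw [h2]; exact (hwdiff x).hasFDerivAt
    have hdir : HasDerivAt (fun τ : ℝ => w (x + τ • e)) (fderiv ℝ w x e) 0 :=
      by exact hdx.comp_hasDerivAt 0 h1
    have hslope := hasDerivAt_iff_tendsto_slope.mp hdir
    have hseq : Filter.Tendsto u Filter.atTop (𝓝[≠] (0:ℝ)) :=
      tendsto_nhdsWithin_of_tendsto_nhds_of_eventually_within u hu_to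
        (Filter.Eventually.of_forall fun k => (hu_pos k).ne')
    have hcomp := hslope.comp hseq
    have habs := (continuous_abs.continuousAt (x := fderiv ℝ w x e)).tendsto.comp hcomp
    have heq : (fun k => |w (x + u k • e) - w x| / u k)
        = fun k => |slope (fun τ : ℝ => w (x + τ • e)) 0 (u k)| := by
      funext k
      rw [slope_def_field, sub_zero, abs_div, abs_of_pos (hu_pos k)]
      show |w (x + u k • e) - w x| / u k = |w (x + u k • e) - w (x + (0:ℝ) • e)| / u k
      rw [h2]
    rw [heq]
    exact habs
  have hmeasf : ∀ k : ℕ, Measurable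
      (fun x : E => ENNReal.ofReal (|w (x + u k • e) - w x| / u k)) := by
    intro k
    apply ENNReal.measurable_ofReal.comp
    apply Measurable.div_const
    exact ((hwc.measurable.comp (measurable_id.add_const _)).sub hwc.measurable).abs
  calc ∫⁻ x, ENNReal.ofReal |fderiv ℝ w x e|
      = ∫⁻ x, Filter.liminf (fun k => ENNReal.ofReal (|w (x + u k • e) - w x| / u k))
          Filter.atTop := by
        apply lintegral_congr
        intro x
        exact ((ENNReal.continuous_ofReal.continuousAt.tendsto.comp (hpt x)).liminf_eq).symm
    _ ≤ Filter.liminf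
        (fun k => ∫⁻ x, ENNReal.ofReal (|w (x + u k • e) - w x| / u k)) Filter.atTop :=
        lintegral_liminf_le hmeasf
    _ ≤ G := by
        refine le_trans (Filter.liminf_le_liminf (Filter.Eventually.of_forall fun k => ?_))
          (le_of_eq (Filter.liminf_const G))
        have hstep : ∀ x : E, ENNReal.ofReal (|w (x + u k • e) - w x| / u k)
            = ENNReal.ofReal |w (x + u k • e) - w x| * ENNReal.ofReal (u k)⁻¹ := by
          intro x
          rw [div_eq_mul_inv, ENNReal.ofReal_mul (abs_nonneg _)]
        calc ∫⁻ x, ENNReal.ofReal (|w (x + u k • e) - w x| / u k)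
            = (∫⁻ x, ENNReal.ofReal |w (x + u k • e) - w x|) * ENNReal.ofReal (u k)⁻¹ := by
              rw [lintegral_congr hstep]
              rw [lintegral_mul_const' _ _ (by exact ENNReal.ofReal_ne_top)]
          _ ≤ (ENNReal.ofReal (u k) * G) * ENNReal.ofReal (u k)⁻¹ :=
              mul_le_mul_left (heatConv_shift_L1 s hs v hvc hvi hd hgi e he (u k) (hu_pos k)) _
          _ = G * (ENNReal.ofReal (u k) * ENNReal.ofReal (u k)⁻¹) := by ring
          _ = G := by
              rw [← ENNReal.ofReal_mul (hu_pos k).le, mul_inv_cancel₀ (hu_pos k).ne',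
                ENNReal.ofReal_one, mul_one]

lemma clm_norm_le_sum (f : E →L[ℝ] ℝ) :
    ‖f‖ ≤ ∑ i : Fin n, |f (EuclideanSpace.single i 1)| := by
  apply ContinuousLinearMap.opNorm_le_bound _ (Finset.sum_nonneg fun i _ => abs_nonneg _)
  intro ξ
  have hcoord : ∀ i : Fin n, |ξ i| ≤ ‖ξ‖ := by
    intro i
    have h1 : (inner ℝ (EuclideanSpace.single i (1:ℝ)) ξ : ℝ) = ξ i := by
      rw [EuclideanSpace.inner_single_left]
      simp
    have h2 := abs_real_inner_le_norm (EuclideanSpace.single i (1:ℝ)) ξ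
    rw [h1, EuclideanSpace.norm_single] at h2
    simpa using h2
  have hdecomp : ∑ i : Fin n, ξ i • EuclideanSpace.single i (1:ℝ) = ξ := by
    conv_rhs => rw [← (EuclideanSpace.basisFun (Fin n) ℝ).sum_repr ξ]
    apply Finset.sum_congr rfl
    intro i _
    rw [EuclideanSpace.basisFun_repr, EuclideanSpace.basisFun_apply]
  calc ‖f ξ‖ = |∑ i : Fin n, ξ i * f (EuclideanSpace.single i 1)| := by
        rw [Real.norm_eq_abs]
        congr 1
        conv_lhs => rw [← hdecomp]
        rw [map_sum]
        apply Finset.sum_congr rfl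
        intro i _
        rw [ContinuousLinearMap.map_smul, smul_eq_mul]
    _ ≤ ∑ i : Fin n, |ξ i * f (EuclideanSpace.single i 1)| := Finset.abs_sum_le_sum_abs _ _
    _ = ∑ i : Fin n, |ξ i| * |f (EuclideanSpace.single i 1)| := by
        congr 1; funext i; rw [abs_mul]
    _ ≤ ∑ i : Fin n, ‖ξ‖ * |f (EuclideanSpace.single i 1)| :=
        Finset.sum_le_sum fun i _ => mul_le_mul_of_nonneg_right (hcoord i) (abs_nonneg _)
    _ = (∑ i : Fin n, |f (EuclideanSpace.single i 1)|) * ‖ξ‖ := by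
        rw [Finset.sum_mul]
        apply Finset.sum_congr rfl
        intro i _
        ring

lemma l1_bound (s : ℝ) (hs : 0 < s) (v : E → ℝ) (hvc : Continuous v)
    (hvi : Integrable v) (hd : Differentiable ℝ v)
    (hgi : Integrable (fun x => ‖fderiv ℝ v x‖)) :
    ∫⁻ x, ENNReal.ofReal ‖fderiv ℝ (heatConv s v) x‖ ≤
      (n : ℝ≥0∞) * ∫⁻ x, ENNReal.ofReal ‖fderiv ℝ v x‖ := by
  set w := heatConv s v with hwdef
  set G := ∫⁻ x, ENNReal.ofReal ‖fderiv ℝ v x‖ with hGdef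
  calc ∫⁻ x, ENNReal.ofReal ‖fderiv ℝ w x‖
      ≤ ∫⁻ x, ∑ i : Fin n, ENNReal.ofReal |fderiv ℝ w x (EuclideanSpace.single i 1)| := by
        apply lintegral_mono
        intro x
        calc ENNReal.ofReal ‖fderiv ℝ w x‖
            ≤ ENNReal.ofReal (∑ i : Fin n, |fderiv ℝ w x (EuclideanSpace.single i 1)|) :=
              ENNReal.ofReal_le_ofReal (clm_norm_le_sum _)
          _ = ∑ i : Fin n, ENNReal.ofReal |fderiv ℝ w x (EuclideanSpace.single i 1)| :=
              ENNReal.ofReal_sum_of_nonneg fun i _ => abs_nonneg _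
    _ = ∑ i : Fin n, ∫⁻ x, ENNReal.ofReal |fderiv ℝ w x (EuclideanSpace.single i 1)| := by
        apply lintegral_finset_sum
        intro i _
        exact ENNReal.measurable_ofReal.comp
          (measurable_fderiv_apply_const (𝕜 := ℝ) (f := w) (EuclideanSpace.single i 1)).abs
    _ ≤ ∑ _i : Fin n, G := by
        apply Finset.sum_le_sum
        intro i _
        apply dir_bound s hs v hvc hvi hd hgi
        rw [EuclideanSpace.norm_single, norm_one]
    _ = (n : ℝ≥0∞) * G := by
        rw [Finset.sum_const, Finset.card_univ, Fintype.card_fin, nsmul_eq_mul]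

end Aux

/-- **Lemma (heat estimate `‖∇e^{νtΔ}v₀‖_{L²} ≲ (νt)^{-1/4} ‖v₀‖_∞^{1/2} ‖∇v₀‖_{L¹}^{1/2}`).**
The `L^∞` norm of `v₀` is represented by an arbitrary pointwise bound `M`. -/
theorem heat_gradient_L2_estimate (n : ℕ) (hn : 1 ≤ n) :
    ∃ C : ℝ, 0 < C ∧
      ∀ (ν t : ℝ), 0 < ν → 0 < t →
      ∀ (v₀ : EuclideanSpace ℝ (Fin n) → ℝ) (M : ℝ),
        Differentiable ℝ v₀ →
        Integrable v₀ →
        Integrable (fun x => ‖fderiv ℝ v₀ x‖) →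
        (∀ x, |v₀ x| ≤ M) →
        Real.sqrt (∫ x, ‖fderiv ℝ (heatConv (ν * t) v₀) x‖ ^ 2)
          ≤ C * (ν * t) ^ (-(1 : ℝ) / 4) * Real.sqrt M *
            Real.sqrt (∫ x, ‖fderiv ℝ v₀ x‖) := by
  refine ⟨Real.sqrt ((n : ℝ) * heatC n) + 1, by positivity, ?_⟩
  intro ν t hν ht v₀ M hd hvi hgi hM
  set s := ν * t with hsdef
  have hs : 0 < s := mul_pos hν ht
  have hvc : Continuous v₀ := hd.continuous
  set w := heatConv s v₀ with hwdef
  have hM0 : 0 ≤ M := le_trans (abs_nonneg _) (hM 0)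
  set G := ∫ x, ‖fderiv ℝ v₀ x‖ with hGdef
  have hG0 : 0 ≤ G := integral_nonneg fun x => norm_nonneg _
  have hCnonneg : 0 ≤ heatC n := by
    have hJ : 0 ≤ ∫ u : EuclideanSpace ℝ (Fin n), ‖u‖ * Real.exp (-(1/4) * ‖u‖ ^ 2) :=
      integral_nonneg fun u => by positivity
    rw [heatC]
    apply div_nonneg _ (by norm_num)
    exact mul_nonneg (Real.rpow_nonneg (by positivity) _) hJ
  set A := M * (heatC n / Real.sqrt s) with hAdef
  have hA0 : 0 ≤ A := by
    apply mul_nonneg hM0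
    apply div_nonneg hCnonneg (Real.sqrt_nonneg s)
  have hAbound : ∀ x, ‖fderiv ℝ w x‖ ≤ A := norm_fderiv_heatConv_le s hs v₀ hvc hvi M hM
  have hGl : ∫⁻ x, ENNReal.ofReal ‖fderiv ℝ v₀ x‖ = ENNReal.ofReal G :=
    (MeasureTheory.ofReal_integral_eq_lintegral_ofReal hgi
      (Filter.Eventually.of_forall fun x => norm_nonneg _)).symm
  have hL1 : ∫⁻ x, ENNReal.ofReal ‖fderiv ℝ w x‖ ≤ (n : ENNReal) * ENNReal.ofReal G := by
    rw [← hGl]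
    exact l1_bound s hs v₀ hvc hvi hd hgi
  have hsq : ∫⁻ x, ENNReal.ofReal (‖fderiv ℝ w x‖ ^ 2)
      ≤ ENNReal.ofReal A * ((n : ENNReal) * ENNReal.ofReal G) := by
    calc ∫⁻ x, ENNReal.ofReal (‖fderiv ℝ w x‖ ^ 2)
        ≤ ∫⁻ x, ENNReal.ofReal A * ENNReal.ofReal ‖fderiv ℝ w x‖ := by
          apply lintegral_mono
          intro x
          show ENNReal.ofReal (‖fderiv ℝ w x‖ ^ 2)
            ≤ ENNReal.ofReal A * ENNReal.ofReal ‖fderiv ℝ w x‖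
          rw [← ENNReal.ofReal_mul hA0]
          apply ENNReal.ofReal_le_ofReal
          calc ‖fderiv ℝ w x‖ ^ 2 = ‖fderiv ℝ w x‖ * ‖fderiv ℝ w x‖ := sq ‖fderiv ℝ w x‖
            _ ≤ A * ‖fderiv ℝ w x‖ := mul_le_mul_of_nonneg_right (hAbound x) (norm_nonneg _)
      _ = ENNReal.ofReal A * ∫⁻ x, ENNReal.ofReal ‖fderiv ℝ w x‖ :=
          lintegral_const_mul _ (ENNReal.measurable_ofReal.comp (measurable_fderiv ℝ w).norm)
      _ ≤ ENNReal.ofReal A * ((n : ENNReal) * ENNReal.ofReal G) := mul_le_mul_right hL1 _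
  have hwmeas : AEStronglyMeasurable (fun x : EuclideanSpace ℝ (Fin n) => ‖fderiv ℝ w x‖ ^ 2)
      volume := ((measurable_fderiv ℝ w).norm.pow_const 2).aestronglyMeasurable
  have hI2 : ∫ x, ‖fderiv ℝ w x‖ ^ 2 ≤ A * ((n : ℝ) * G) := by
    rw [MeasureTheory.integral_eq_lintegral_of_nonneg_ae
      (Filter.Eventually.of_forall fun x => sq_nonneg _) hwmeas]
    have hfin : ENNReal.ofReal A * ((n : ENNReal) * ENNReal.ofReal G) ≠ ⊤ :=
      ENNReal.mul_ne_top ENNReal.ofReal_ne_top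
        (ENNReal.mul_ne_top (ENNReal.natCast_ne_top n) ENNReal.ofReal_ne_top)
    calc (∫⁻ x, ENNReal.ofReal (‖fderiv ℝ w x‖ ^ 2)).toReal
        ≤ (ENNReal.ofReal A * ((n : ENNReal) * ENNReal.ofReal G)).toReal :=
          ENNReal.toReal_mono hfin hsq
      _ = A * ((n : ℝ) * G) := by
          rw [ENNReal.toReal_mul, ENNReal.toReal_mul, ENNReal.toReal_ofReal hA0,
            ENNReal.toReal_ofReal hG0, ENNReal.toReal_natCast]
  have hfinal := Real.sqrt_le_sqrt hI2
  apply le_trans hfinal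
  have hsqrtpos : 0 < Real.sqrt s := Real.sqrt_pos.mpr hs
  have hrpow : (Real.sqrt s)⁻¹ = s ^ (-(1:ℝ)/2) := by
    rw [Real.sqrt_eq_rpow, ← Real.rpow_neg_one (s ^ ((1:ℝ)/2)), ← Real.rpow_mul hs.le]
    norm_num
  have hAeq : A * ((n : ℝ) * G) = ((n : ℝ) * heatC n) * (s ^ (-(1:ℝ)/2)) * M * G := by
    rw [hAdef, ← hrpow]
    field_simp
  rw [hAeq]
  have hP0 : (0:ℝ) ≤ (n : ℝ) * heatC n := mul_nonneg (Nat.cast_nonneg n) hCnonneg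
  have hQ0 : (0:ℝ) ≤ s ^ (-(1:ℝ)/2) := Real.rpow_nonneg hs.le _
  rw [Real.sqrt_mul (mul_nonneg (mul_nonneg hP0 hQ0) hM0) G,
    Real.sqrt_mul (mul_nonneg hP0 hQ0) M,
    Real.sqrt_mul hP0 (s ^ (-(1:ℝ)/2))]
  have hsq4 : Real.sqrt (s ^ (-(1:ℝ)/2)) = s ^ (-(1:ℝ)/4) := by
    rw [Real.sqrt_eq_rpow, ← Real.rpow_mul hs.le]
    norm_num
  rw [hsq4]
  have h14 : (0:ℝ) ≤ s ^ (-(1:ℝ)/4) := Real.rpow_nonneg hs.le _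
  gcongr
  linarith [Real.sqrt_nonneg ((n : ℝ) * heatC n)]
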